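/- Let G be a graph with a k-set S inducing a clique or independent set, such that all vertices of S have degrees within M of each other. Then there exists a set T of at most (M+2)(2k−1)^{k−1} vertices of G, disjoint from S, such that in the induced subgraph H = G − T all k vertices of S have equal degree. -/

import Mathlib

open Finset

variable {V : Type*} [Fintype V] [DecidableEq V]

/-- The degree of `v` in the subgraph of `G` induced on the vertex set `s`:
the number of neighbours of `v` lying in `s`. -/
def degIn (G : SimpleGraph V) [DecidableRel G.Adj] (s : Finset V) (v : V) : ℕ :=
  (s.filter fun u => G.Adj v u).card

/-- The maximum degree of the subgraph of `G` induced on `s`. -/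
def maxDegIn (G : SimpleGraph V) [DecidableRel G.Adj] (s : Finset V) : ℕ :=
  s.sup (degIn G s)

/-- The `k`-th largest degree of the subgraph of `G` induced on `s`
(the entry at position `|s| - k` of the increasingly sorted degree sequence). -/
def kthLargestDeg (G : SimpleGraph V) [DecidableRel G.Adj] (s : Finset V) (k : ℕ) : ℕ :=
  (Multiset.sort (s.val.map (degIn G s)) (· ≤ ·)).getD (s.card - k) 0

/-- `r_k` of the subgraph of `G` induced on `s`: the difference between its
maximum degree and its `k`-th largest degree. -/
def rk (G : SimpleGraph V) [DecidableRel G.Adj] (s : Finset V) (k : ℕ) : ℕ :=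
  maxDegIn G s - kthLargestDeg G s k


section AuxSteinitz


/-- witness predicate: `lam` is in the polytope. -/
def IsWit {n d : ℕ} (v : Fin n → Fin d → ℚ) (c : ℚ) (lam : Fin n → ℚ) : Prop :=
  (∀ i, 0 ≤ lam i ∧ lam i ≤ 1) ∧ ∑ i, lam i = c ∧ ∀ j, ∑ i, lam i * v i j = 0

def fracCard {n : ℕ} (lam : Fin n → ℚ) : ℕ :=
  (Finset.univ.filter (fun i => lam i ≠ 0 ∧ lam i ≠ 1)).card

lemma step_reduce {n d : ℕ} (v : Fin n → Fin d → ℚ) (c : ℚ) (lam : Fin n → ℚ)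
    (hw : IsWit v c lam) (hbig : d + 2 ≤ fracCard lam) :
    ∃ lam', IsWit v c lam' ∧ fracCard lam' < fracCard lam := by
  classical
  obtain ⟨hbox, hsum, hv⟩ := hw
  set F : Finset (Fin n) := Finset.univ.filter (fun i => lam i ≠ 0 ∧ lam i ≠ 1) with hF
  -- a nonzero kernel element
  let coef : Fin (d+1) → ↥F → ℚ := fun k i => Fin.cases 1 (fun j => v i j) k
  let T : (↥F → ℚ) →ₗ[ℚ] (Fin (d+1) → ℚ) :=
    LinearMap.pi (fun k => ∑ i : ↥F, coef k i • LinearMap.proj i)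
  have hTapp : ∀ (g : ↥F → ℚ) (k : Fin (d+1)), T g k = ∑ i : ↥F, coef k i * g i := by
    intro g k
    simp [T, LinearMap.pi_apply, LinearMap.sum_apply, LinearMap.smul_apply,
      LinearMap.proj_apply, smul_eq_mul]
  have hninj : ¬ Function.Injective T := by
    intro hinj
    have h1 := LinearMap.finrank_le_finrank_of_injective hinj
    rw [Module.finrank_fintype_fun_eq_card, Module.finrank_fintype_fun_eq_card] at h1
    rw [Fintype.card_coe, Fintype.card_fin] at h1
    have hcF : F.card = fracCard lam := rfl
    omega
  rw [Function.not_injective_iff] at hninj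
  obtain ⟨a, b, hab, hne⟩ := hninj
  have hker : T (a - b) = 0 := by rw [map_sub, hab, sub_self]
  set μ0 : ↥F → ℚ := a - b with hμ0
  have hμ0ne : ∃ i, μ0 i ≠ 0 := by
    by_contra hcon
    push_neg at hcon
    exact hne (funext fun i => by have := hcon i; simpa [hμ0, sub_eq_zero] using this)
  set μ : Fin n → ℚ := fun i => if h : i ∈ F then μ0 ⟨i, h⟩ else 0 with hμ
  have hμF : ∀ i ∉ F, μ i = 0 := fun i hi => by simp [hμ, hi]
  have hμsumF : ∀ (g : Fin n → ℚ), ∑ i, μ i * g i = ∑ i : ↥F, μ0 i * g i := by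
    intro g
    rw [← Finset.sum_subset (Finset.subset_univ F)
      (fun i _ hi => by rw [hμF i hi, zero_mul])]
    rw [← Finset.sum_attach F (fun i => μ i * g i)]
    exact Finset.sum_congr rfl fun i _ => by simp [hμ, i.2]
  have hμsum : ∑ i, μ i = 0 := by
    have h0 := congrFun hker 0
    rw [hTapp] at h0
    have : ∑ i, μ i = ∑ i, μ i * (1:ℚ) := by simp
    rw [this, hμsumF]
    simpa [coef] using h0
  have hμv : ∀ j, ∑ i, μ i * v i j = 0 := by
    intro j
    have h0 := congrFun hker j.succ
    rw [hTapp] at h0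
    rw [hμsumF]
    simpa [coef, mul_comm] using h0
  obtain ⟨i1, hi1⟩ := hμ0ne
  have hi1' : μ (i1 : Fin n) ≠ 0 := by
    have : μ (i1 : Fin n) = μ0 i1 := by simp [hμ, i1.2]
    rw [this]; exact hi1
  -- the step length
  set Fμ : Finset (Fin n) := F.filter (fun i => μ i ≠ 0) with hFμ
  have hFμne : Fμ.Nonempty := ⟨i1, by simp [hFμ, i1.2, hi1']⟩
  set ratio : Fin n → ℚ := fun i => if 0 < μ i then (1 - lam i) / μ i else lam i / (-μ i)
    with hratio
  have hfrac : ∀ i ∈ Fμ, 0 < lam i ∧ lam i < 1 ∧ μ i ≠ 0 := by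
    intro i hi
    rw [hFμ, Finset.mem_filter] at hi
    obtain ⟨hiF, hiμ⟩ := hi
    rw [hF, Finset.mem_filter] at hiF
    obtain ⟨-, h0, h1⟩ := hiF
    exact ⟨lt_of_le_of_ne (hbox i).1 (Ne.symm h0), lt_of_le_of_ne (hbox i).2 h1, hiμ⟩
  have hratio_def : ∀ i, ratio i = if 0 < μ i then (1 - lam i) / μ i else lam i / (-μ i) :=
    fun i => rfl
  have hratio_pos : ∀ i ∈ Fμ, 0 < ratio i := by
    intro i hi
    obtain ⟨h0, h1, hμi⟩ := hfrac i hi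
    rw [hratio_def]
    by_cases hc : 0 < μ i
    · rw [if_pos hc]; exact div_pos (by linarith) hc
    · rw [if_neg hc]
      have hlt : μ i < 0 := lt_of_le_of_ne (not_lt.mp hc) hμi
      exact div_pos h0 (by linarith)
  obtain ⟨i0, hi0, hmin⟩ := Finset.exists_min_image Fμ ratio hFμne
  set t : ℚ := ratio i0 with htdef
  have ht : 0 < t := hratio_pos i0 hi0
  set lam' : Fin n → ℚ := fun i => lam i + t * μ i with hlam'
  -- box bounds
  have hbox' : ∀ i, 0 ≤ lam' i ∧ lam' i ≤ 1 := by
    intro i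
    by_cases hμi : μ i = 0
    · simp [hlam', hμi]; exact hbox i
    · have hiFμ : i ∈ Fμ := by
        rw [hFμ, Finset.mem_filter]
        refine ⟨?_, hμi⟩
        by_contra hiF
        exact hμi (hμF i hiF)
      have htle := hmin i hiFμ
      obtain ⟨h0, h1, -⟩ := hfrac i hiFμ
      rcases lt_or_gt_of_ne hμi with hneg | hpos
      · -- μ i < 0
        have hr : ratio i = lam i / (-μ i) := by rw [hratio_def]; rw [if_neg (by linarith)]
        rw [hr] at htle
        have hkey : t * (-μ i) ≤ lam i := (le_div_iff₀ (by linarith)).mp htle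
        have hprod : 0 < t * (-μ i) := mul_pos ht (by linarith)
        constructor
        · show 0 ≤ lam i + t * μ i
          nlinarith
        · show lam i + t * μ i ≤ 1
          nlinarith
      · -- μ i > 0
        have hr : ratio i = (1 - lam i) / μ i := by rw [hratio_def]; rw [if_pos hpos]
        rw [hr] at htle
        have hkey : t * μ i ≤ 1 - lam i := (le_div_iff₀ hpos).mp htle
        have hprod : 0 < t * μ i := mul_pos ht hpos
        constructor
        · show 0 ≤ lam i + t * μ i
          nlinarith
        · show lam i + t * μ i ≤ 1
          nlinarith
  -- i0 becomes integral
  have hi0int : lam' i0 = 0 ∨ lam' i0 = 1 := by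
    obtain ⟨h0, h1, hμi⟩ := hfrac i0 hi0
    have htr : t = ratio i0 := rfl
    rcases lt_or_gt_of_ne hμi with hneg | hpos
    · left
      have hr : ratio i0 = lam i0 / (-μ i0) := by rw [hratio_def]; rw [if_neg (by linarith)]
      have hmm : lam i0 / (-μ i0) * μ i0 = -lam i0 := by
        rw [div_mul_eq_mul_div, div_neg, mul_div_assoc, div_self hμi, mul_one]
      show lam i0 + t * μ i0 = 0
      rw [htr, hr, hmm]; ring
    · right
      have hr : ratio i0 = (1 - lam i0) / μ i0 := by rw [hratio_def]; rw [if_pos hpos]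
      have hmm : (1 - lam i0) / μ i0 * μ i0 = 1 - lam i0 :=
        div_mul_cancel₀ _ hμi
      show lam i0 + t * μ i0 = 1
      rw [htr, hr, hmm]; ring
  -- constraints
  have hsum' : ∑ i, lam' i = c := by
    rw [hlam']
    rw [Finset.sum_add_distrib, ← Finset.mul_sum, hμsum, hsum]; ring
  have hv' : ∀ j, ∑ i, lam' i * v i j = 0 := by
    intro j
    rw [hlam']
    have : ∀ i, (lam i + t * μ i) * v i j = lam i * v i j + t * (μ i * v i j) := by
      intro i; ring
    simp_rw [this]
    rw [Finset.sum_add_distrib, ← Finset.mul_sum, hμv j, hv j]; ring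
  refine ⟨lam', ⟨hbox', hsum', hv'⟩, ?_⟩
  have hsub : (Finset.univ.filter (fun i => lam' i ≠ 0 ∧ lam' i ≠ 1)) ⊆ F.erase i0 := by
    intro i hi
    rw [Finset.mem_filter] at hi
    obtain ⟨-, h0, h1⟩ := hi
    rw [Finset.mem_erase]
    constructor
    · rintro rfl
      rcases hi0int with h | h
      · exact h0 h
      · exact h1 h
    · by_contra hiF
      have hμi : μ i = 0 := hμF i hiF
      have : lam' i = lam i := by simp [hlam', hμi]
      rw [hF] at hiF
      simp only [Finset.mem_filter, Finset.mem_univ, true_and] at hiF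
      push_neg at hiF
      rcases eq_or_ne (lam i) 0 with h | h
      · exact h0 (by rw [this, h])
      · exact h1 (by rw [this, hiF h])
  calc (Finset.univ.filter (fun i => lam' i ≠ 0 ∧ lam' i ≠ 1)).card
      ≤ (F.erase i0).card := Finset.card_le_card hsub
    _ < F.card := by
        have hi0F : i0 ∈ F := (Finset.mem_filter.mp (by rw [hFμ] at hi0; exact hi0)).1
        exact Finset.card_erase_lt_of_mem hi0F
    _ = fracCard lam := rfl

lemma exists_few_frac {n d : ℕ} (v : Fin n → Fin d → ℚ) (c : ℚ)
    (h : ∃ lam, IsWit v c lam) :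
    ∃ lam, IsWit v c lam ∧ fracCard lam ≤ d + 1 := by
  classical
  set Q : Set ℕ := {m | ∃ lam, IsWit v c lam ∧ fracCard lam = m} with hQ
  have hQne : Q.Nonempty := by
    obtain ⟨lam, hw⟩ := h
    exact ⟨fracCard lam, lam, hw, rfl⟩
  obtain ⟨lam, hw, hcard⟩ := Nat.sInf_mem hQne
  by_cases hle : fracCard lam ≤ d + 1
  · exact ⟨lam, hw, hle⟩
  · exfalso
    push_neg at hle
    obtain ⟨lam', hw', hlt⟩ := step_reduce v c lam hw (by omega)
    have : sInf Q ≤ fracCard lam' := Nat.sInf_le ⟨lam', hw', rfl⟩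
    omega

lemma steinitz_perm (d : ℕ) : ∀ (n : ℕ) (v : Fin n → Fin d → ℚ),
    (∀ i j, |v i j| ≤ 1) →
    (∃ lam, IsWit v ((n : ℚ) - d) lam) →
    ∃ σ : Fin n ≃ Fin n, ∀ (m : ℕ) (j : Fin d),
      |∑ i ∈ Finset.univ.filter (fun i => ((σ i : Fin n) : ℕ) < m), v i j| ≤ (d : ℚ) := by
  intro n
  induction n with
  | zero =>
      intro v hb hw
      refine ⟨Equiv.refl _, fun m j => ?_⟩
      rw [show (Finset.univ.filter (fun i : Fin 0 => ((Equiv.refl (Fin 0)) i : ℕ) < m)) = ∅ from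
        Finset.eq_empty_of_isEmpty _]
      simp
  | succ n ih =>
      intro v hb hw
      obtain ⟨lam, hbox, hsum, hv⟩ := hw
      -- total sum bound
      have htot : ∀ j, |∑ i, v i j| ≤ (d : ℚ) := by
        intro j
        have hrw : ∑ i, v i j = ∑ i, (1 - lam i) * v i j := by
          have : ∀ i, (1 - lam i) * v i j = v i j - lam i * v i j := fun i => by ring
          simp_rw [this]
          rw [Finset.sum_sub_distrib, hv j, sub_zero]
        rw [hrw]
        calc |∑ i, (1 - lam i) * v i j| ≤ ∑ i, |(1 - lam i) * v i j| :=
              Finset.abs_sum_le_sum_abs _ _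
          _ ≤ ∑ i, (1 - lam i) := by
              apply Finset.sum_le_sum
              intro i _
              rw [abs_mul, abs_of_nonneg (by linarith [(hbox i).2] : (0:ℚ) ≤ 1 - lam i)]
              calc (1 - lam i) * |v i j| ≤ (1 - lam i) * 1 :=
                    mul_le_mul_of_nonneg_left (hb i j) (by linarith [(hbox i).2])
                _ = 1 - lam i := mul_one _
          _ = (d : ℚ) := by
              rw [Finset.sum_sub_distrib, hsum]
              simp
      by_cases hdn : d ≤ n
      · -- main inductive step
        have hpos : (0:ℚ) < (n:ℚ) + 1 - d := by
          have : (d:ℚ) ≤ n := by exact_mod_cast hdn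
          linarith
        set f : ℚ := ((n:ℚ) - d) / ((n:ℚ) + 1 - d) with hf
        have hf0 : 0 ≤ f := div_nonneg (by
          have : (d:ℚ) ≤ n := by exact_mod_cast hdn
          linarith) (le_of_lt hpos)
        have hf1 : f ≤ 1 := by
          rw [hf, div_le_one hpos]; linarith
        have hsum' : (↑(n+1) : ℚ) - d = (n:ℚ) + 1 - d := by push_cast; ring
        have hwit2 : ∃ lam2, IsWit v ((n:ℚ) - d) lam2 := by
          refine ⟨fun i => f * lam i, fun i => ⟨mul_nonneg hf0 (hbox i).1, ?_⟩, ?_, ?_⟩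
          · calc f * lam i ≤ 1 * 1 :=
                mul_le_mul hf1 (hbox i).2 (hbox i).1 zero_le_one
              _ = 1 := one_mul 1
          · rw [← Finset.mul_sum, hsum, hsum', hf]
            exact div_mul_cancel₀ _ (ne_of_gt hpos)
          · intro j
            simp_rw [mul_assoc]
            rw [← Finset.mul_sum, hv j, mul_zero]
        obtain ⟨μ, ⟨hbox2, hsum2, hv2⟩, hfrac2⟩ := exists_few_frac v _ hwit2
        -- find a zero coordinate
        have hzero : ∃ i0, μ i0 = 0 := by
          by_contra hcon
          push_neg at hcon
          have hcardsplit := Finset.card_filter_add_card_filter_not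
            (s := (Finset.univ : Finset (Fin (n+1)))) (p := fun i => μ i = 1)
          have hfeq : (Finset.univ.filter (fun i : Fin (n+1) => ¬ μ i = 1))
              = Finset.univ.filter (fun i => μ i ≠ 0 ∧ μ i ≠ 1) := by
            apply Finset.filter_congr
            intro i _
            simp [hcon i]
          have hsumsplit := Finset.sum_filter_add_sum_filter_not
            (Finset.univ : Finset (Fin (n+1))) (fun i => μ i = 1) μ
          set Ones := Finset.univ.filter (fun i : Fin (n+1) => μ i = 1) with hOnes
          set Frac := Finset.univ.filter (fun i : Fin (n+1) => μ i ≠ 0 ∧ μ i ≠ 1) with hFrac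
          rw [hfeq] at hcardsplit hsumsplit
          have hones_sum : ∑ i ∈ Ones, μ i = (Ones.card : ℚ) := by
            rw [Finset.sum_congr rfl (fun i hi => (Finset.mem_filter.mp hi).2)]
            simp [hOnes]
          have hcard : Ones.card + Frac.card = n + 1 := by simpa using hcardsplit
          have hf2 : Frac.card ≤ d + 1 := hfrac2
          have hQ : (Ones.card : ℚ) + ∑ i ∈ Frac, μ i = (n:ℚ) - d := by
            rw [← hones_sum]; rw [hsumsplit]; exact hsum2
          rcases Finset.eq_empty_or_nonempty Frac with hFe | hFne
          · rw [hFe] at hQ hcard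
            simp at hQ hcard
            have : ((n:ℚ) + 1) = (n:ℚ) - d := by
              rw [← hQ, hcard]; push_cast; ring
            have hd0 : (d:ℚ) = -1 := by linarith
            have : (0:ℚ) ≤ (d:ℚ) := Nat.cast_nonneg d
            linarith
          · have hSf : 0 < ∑ i ∈ Frac, μ i := by
              apply Finset.sum_pos
              · intro i hi
                rw [hFrac, Finset.mem_filter] at hi
                exact lt_of_le_of_ne (hbox2 i).1 (Ne.symm hi.2.1)
              · exact hFne
            have ht1 : (Ones.card : ℚ) < (n:ℚ) - d := by linarith
            have ht2 : n - d ≤ Ones.card := by omega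
            have : ((n - d : ℕ) : ℚ) ≤ (Ones.card : ℚ) := by exact_mod_cast ht2
            rw [Nat.cast_sub hdn] at this
            linarith
        obtain ⟨i0, hz⟩ := hzero
        -- restricted family
        set v' : Fin n → Fin d → ℚ := fun k => v (i0.succAbove k) with hv'
        have hwit' : ∃ lam', IsWit v' ((n:ℚ) - d) lam' := by
          refine ⟨fun k => μ (i0.succAbove k), fun k => hbox2 _, ?_, ?_⟩
          · have := Fin.sum_univ_succAbove μ i0
            rw [hz, zero_add] at this
            rw [← this, hsum2]
          · intro j
            have := Fin.sum_univ_succAbove (fun i => μ i * v i j) i0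
            rw [hz, zero_mul, zero_add] at this
            rw [← this, hv2 j]
        obtain ⟨σ', hpre'⟩ := ih v' (fun k j => hb _ j) hwit'
        set σ : Fin (n+1) ≃ Fin (n+1) :=
          (finSuccEquiv' i0).trans ((Equiv.optionCongr σ').trans
            (finSuccEquiv' (Fin.last n)).symm) with hσ
        have hσi0 : σ i0 = Fin.last n := by
          simp only [hσ, Equiv.trans_apply, finSuccEquiv'_at, Equiv.optionCongr_apply,
            Option.map_none]
          exact finSuccEquiv'_symm_none _
        have hσab : ∀ k, σ (i0.succAbove k) = (σ' k).castSucc := by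
          intro k
          simp only [hσ, Equiv.trans_apply, finSuccEquiv'_succAbove, Equiv.optionCongr_apply,
            Option.map_some]
          rw [finSuccEquiv'_symm_some, Fin.succAbove_last]
        refine ⟨σ, fun m j => ?_⟩
        by_cases hm : m ≤ n
        · rw [Finset.sum_filter]
          rw [Fin.sum_univ_succAbove (fun i => if ((σ i : Fin (n+1)) : ℕ) < m then v i j else 0) i0]
          rw [hσi0]
          rw [if_neg (by simp [Fin.last]; omega)]
          rw [zero_add]
          have hrw : ∀ k, (if ((σ (i0.succAbove k) : Fin (n+1)) : ℕ) < m then v (i0.succAbove k) j else 0)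
              = (if ((σ' k : Fin n) : ℕ) < m then v' k j else 0) := by
            intro k
            rw [hσab k, Fin.coe_castSucc]
          simp_rw [hrw]
          rw [← Finset.sum_filter]
          exact hpre' m j
        · have : Finset.univ.filter (fun i : Fin (n+1) => ((σ i : Fin (n+1)) : ℕ) < m)
              = Finset.univ := by
            apply Finset.filter_true_of_mem
            intro i _
            have := (σ i).isLt
            omega
          rw [this]
          exact htot j
      · -- trivial case : n + 1 ≤ d
        refine ⟨Equiv.refl _, fun m j => ?_⟩
        calc |∑ i ∈ Finset.univ.filter (fun i : Fin (n+1) => ((Equiv.refl _ i : Fin (n+1)) : ℕ) < m), v i j|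
            ≤ ∑ i ∈ Finset.univ.filter (fun i : Fin (n+1) => ((Equiv.refl _ i : Fin (n+1)) : ℕ) < m), |v i j| :=
              Finset.abs_sum_le_sum_abs _ _
          _ ≤ ∑ _i ∈ Finset.univ.filter (fun i : Fin (n+1) => ((Equiv.refl _ i : Fin (n+1)) : ℕ) < m), (1:ℚ) :=
              Finset.sum_le_sum (fun i _ => hb i j)
          _ = ((Finset.univ.filter (fun i : Fin (n+1) => ((Equiv.refl _ i : Fin (n+1)) : ℕ) < m)).card : ℚ) := by
              rw [Finset.sum_const]; simp
          _ ≤ (d : ℚ) := by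
              have h1 : (Finset.univ.filter (fun i : Fin (n+1) => ((Equiv.refl _ i : Fin (n+1)) : ℕ) < m)).card ≤ n + 1 :=
                le_trans (Finset.card_filter_le _ _) (by simp)
              have : (Finset.univ.filter (fun i : Fin (n+1) => ((Equiv.refl _ i : Fin (n+1)) : ℕ) < m)).card ≤ d := by omega
              exact_mod_cast this

lemma subset_sum_small {ι : Type*} [DecidableEq ι] (d M : ℕ) (A : Finset ι)
    (x : ι → Fin d → ℤ) (hx : ∀ i ∈ A, ∀ j, |x i j| ≤ 1)
    (s : Fin d → ℤ) (hs : ∀ j, |s j| ≤ (M : ℤ))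
    (hsum : ∀ j, ∑ i ∈ A, x i j = s j) :
    ∃ B ⊆ A, (∀ j, ∑ i ∈ B, x i j = s j) ∧ B.card ≤ (M + 1) * (2 * d + 1) ^ d := by
  classical
  set C : Finset (Finset ι) := A.powerset.filter (fun B => ∀ j, ∑ i ∈ B, x i j = s j) with hC
  have hAC : A ∈ C := by
    rw [hC, Finset.mem_filter]
    exact ⟨Finset.mem_powerset_self A, hsum⟩
  obtain ⟨B, hBC, hBmin⟩ := Finset.exists_min_image C Finset.card ⟨A, hAC⟩
  have hBA : B ⊆ A := Finset.mem_powerset.mp (Finset.mem_filter.mp hBC).1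
  have hBsum : ∀ j, ∑ i ∈ B, x i j = s j := (Finset.mem_filter.mp hBC).2
  refine ⟨B, hBA, hBsum, ?_⟩
  set n := B.card with hn
  set N := n + M with hN
  set el : Fin n → ι := fun i => ((B.equivFin.symm i : ↥B) : ι) with hel
  have helmem : ∀ i, el i ∈ B := fun i => (B.equivFin.symm i).2
  have helinj : Function.Injective el := fun i i' h =>
    B.equivFin.symm.injective (Subtype.ext h)
  have helsum : ∀ (g : ι → ℤ), ∑ i, g (el i) = ∑ b ∈ B, g b := by
    intro g
    rw [hel]
    rw [Equiv.sum_comp B.equivFin.symm (fun b : ↥B => g (b : ι))]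
    exact Finset.sum_coe_sort B g
  -- the balancing vectors
  set y : Fin M → Fin d → ℤ := fun m j => if (m : ℕ) < (s j).natAbs then -(s j).sign else 0
    with hy
  have hysum : ∀ j, ∑ m, y m j = -(s j) := by
    intro j
    have hsj := abs_le.mp (hs j)
    have ht : (s j).natAbs ≤ M := by omega
    rw [hy]
    rw [Fin.sum_univ_eq_sum_range (fun m => if m < (s j).natAbs then -(s j).sign else 0) M]
    rw [← Finset.sum_filter]
    have hfe : (Finset.range M).filter (fun m => m < (s j).natAbs)
        = Finset.range (s j).natAbs := by
      ext m
      simp only [Finset.mem_filter, Finset.mem_range]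
      omega
    rw [hfe, Finset.sum_const, Finset.card_range, nsmul_eq_mul, mul_neg, mul_comm,
      Int.sign_mul_natAbs]
  have hybd : ∀ m j, |y m j| ≤ 1 := by
    intro m j
    rw [hy]
    dsimp only
    split
    · rw [abs_neg]
      rcases Int.lt_trichotomy (s j) 0 with h | h | h
      · rw [Int.sign_eq_neg_one_of_neg h]; norm_num
      · rw [h]; norm_num
      · rw [Int.sign_eq_one_of_pos h]; norm_num
    · norm_num
  -- combined family
  set e : Fin N → Fin d → ℤ :=
    fun i => if h : (i : ℕ) < n then x (el ⟨i, h⟩) else y ⟨(i : ℕ) - n, by omega⟩ with he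
  have hebd : ∀ i j, |e i j| ≤ 1 := by
    intro i j
    rw [he]
    dsimp only
    split
    · exact hx _ (hBA (helmem _)) j
    · exact hybd _ j
  have hezero : ∀ j, ∑ i, e i j = 0 := by
    intro j
    rw [show (Finset.univ : Finset (Fin N)).sum (fun i => e i j)
      = ∑ i : Fin (n + M), e i j from rfl]
    rw [Fin.sum_univ_add (fun i : Fin (n + M) => e i j)]
    have h1 : ∀ i : Fin n, e (Fin.castAdd M i) j = x (el i) j := by
      intro i
      rw [he]
      dsimp only
      have hlt : ((Fin.castAdd M i : Fin (n + M)) : ℕ) < n := by simp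
      rw [dif_pos hlt]
      have hieq : (⟨((Fin.castAdd M i : Fin (n + M)) : ℕ), hlt⟩ : Fin n) = i := by
        apply Fin.ext; simp
      rw [hieq]
    have h2 : ∀ i : Fin M, e (Fin.natAdd n i) j = y i j := by
      intro i
      rw [he]
      dsimp only
      rw [dif_neg (by simp : ¬ ((Fin.natAdd n i : Fin N) : ℕ) < n)]
      have hieq : (⟨((Fin.natAdd n i : Fin (n + M)) : ℕ) - n, by rw [Fin.coe_natAdd]; omega⟩ : Fin M) = i := by
        apply Fin.ext; simp
      rw [hieq]
    rw [Finset.sum_congr rfl (fun i _ => h1 i), Finset.sum_congr rfl (fun i _ => h2 i)]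
    rw [helsum (fun b => x b j), hBsum j, hysum j]
    ring
  -- Steinitz
  have hKpos : 1 ≤ (2 * d + 1) ^ d := Nat.one_le_pow _ _ (by omega)
  by_cases hNd : N < d
  · -- trivial bound
    have : n ≤ (2 * d + 1) ^ d := by
      rcases Nat.eq_zero_or_pos d with rfl | hd
      · omega
      · have h1 : 2 * d + 1 ≤ (2 * d + 1) ^ d := Nat.le_self_pow (by omega) _
        omega
    calc n ≤ 1 * (2 * d + 1) ^ d := by omega
      _ ≤ (M + 1) * (2 * d + 1) ^ d := Nat.mul_le_mul_right _ (by omega)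
  · push_neg at hNd
    rcases Nat.eq_zero_or_pos N with hN0 | hNpos
    · have : n = 0 := by omega
      rw [this]
      exact Nat.zero_le _
    have hNq : (0 : ℚ) < (N : ℚ) := by exact_mod_cast hNpos
    set vq : Fin N → Fin d → ℚ := fun i j => ((e i j : ℤ) : ℚ) with hvq
    have hwit : ∃ lam, IsWit vq ((N : ℚ) - d) lam := by
      refine ⟨fun _ => ((N : ℚ) - d) / N, fun i => ⟨?_, ?_⟩, ?_, ?_⟩
      · apply div_nonneg _ (le_of_lt hNq)
        have : (d : ℚ) ≤ N := by exact_mod_cast hNd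
        linarith
      · rw [div_le_one hNq]
        have : (0 : ℚ) ≤ d := Nat.cast_nonneg d
        linarith
      · rw [Finset.sum_const, Finset.card_univ, Fintype.card_fin, nsmul_eq_mul]
        rw [mul_div_cancel₀ _ (ne_of_gt hNq)]
      · intro j
        rw [← Finset.mul_sum]
        have : ∑ i, vq i j = 0 := by
          rw [hvq]
          dsimp only
          rw [← Int.cast_sum]
          rw [hezero j]
          norm_num
        rw [this, mul_zero]
    obtain ⟨σ, hpre⟩ := steinitz_perm d N vq (by
      intro i j
      rw [hvq]
      dsimp only
      rw [← Int.cast_abs]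
      exact_mod_cast hebd i j) hwit
    set P : ℕ → Fin d → ℤ :=
      fun m j => ∑ i ∈ Finset.univ.filter (fun i : Fin N => ((σ i : Fin N) : ℕ) < m), e i j
      with hP
    have hPbd : ∀ m j, |P m j| ≤ (d : ℤ) := by
      intro m j
      have h := hpre m j
      have hcast : ∑ i ∈ Finset.univ.filter (fun i : Fin N => ((σ i : Fin N) : ℕ) < m), vq i j
          = ((P m j : ℤ) : ℚ) := by
        rw [hP, hvq]
        dsimp only
        rw [← Int.cast_sum]
      rw [hcast, ← Int.cast_abs] at h
      exact_mod_cast h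
    set ycount : ℕ → ℕ :=
      fun m => (Finset.univ.filter (fun i : Fin N => ((σ i : Fin N) : ℕ) < m ∧ n ≤ (i : ℕ))).card
      with hyc
    have hycM : ∀ m, ycount m ≤ M := by
      intro m
      rw [hyc]
      dsimp only
      have hsub : (Finset.univ.filter (fun i : Fin N => ((σ i : Fin N) : ℕ) < m ∧ n ≤ (i : ℕ)))
          ⊆ (Finset.univ.filter (fun i : Fin N => n ≤ (i : ℕ))) := by
        intro i hi
        rw [Finset.mem_filter] at hi ⊢
        exact ⟨hi.1, hi.2.2⟩
      refine le_trans (Finset.card_le_card hsub) (le_of_eq ?_)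
      rw [Finset.card_filter]
      rw [show (Finset.univ : Finset (Fin N)).sum (fun i => if n ≤ (i:ℕ) then 1 else 0)
        = ∑ i : Fin (n + M), (if n ≤ (i:ℕ) then 1 else 0) from rfl]
      rw [Fin.sum_univ_add (fun i : Fin (n + M) => if n ≤ (i:ℕ) then 1 else 0)]
      have h1 : ∀ i : Fin n, (if n ≤ ((Fin.castAdd M i : Fin (n+M)):ℕ) then 1 else 0) = 0 := by
        intro i
        rw [if_neg]
        simp only [Fin.coe_castAdd]
        omega
      have h2 : ∀ i : Fin M, (if n ≤ ((Fin.natAdd n i : Fin (n+M)):ℕ) then 1 else 0) = 1 := by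
        intro i
        rw [if_pos]
        simp only [Fin.coe_natAdd]
        omega
      rw [Finset.sum_congr rfl (fun i _ => h1 i), Finset.sum_congr rfl (fun i _ => h2 i)]
      simp
  -- injection
    set Φ : Fin (N + 1) → (Fin d → Fin (2 * d + 1)) × Fin (M + 1) :=
      fun m => (fun j => ⟨(P (m : ℕ) j + d).toNat, by
          have h := abs_le.mp (hPbd (m : ℕ) j)
          omega⟩,
        ⟨ycount (m : ℕ), Nat.lt_succ_of_le (hycM (m : ℕ))⟩) with hΦ
    have hkey : ∀ m m' : Fin (N + 1), (m : ℕ) < (m' : ℕ) → Φ m ≠ Φ m' := by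
      intro m m' hmm' heq
      have hPeq : ∀ j, P (m : ℕ) j = P (m' : ℕ) j := by
        intro j
        have h1 := congrFun (congrArg Prod.fst heq) j
        have h2 := congrArg Fin.val h1
        simp only [hΦ] at h2
        have ha := abs_le.mp (hPbd (m : ℕ) j)
        have hb := abs_le.mp (hPbd (m' : ℕ) j)
        omega
      have hyeq : ycount (m : ℕ) = ycount (m' : ℕ) := by
        have h1 := congrArg Prod.snd heq
        have h2 := congrArg Fin.val h1
        simpa [hΦ] using h2
      set Fm := Finset.univ.filter (fun i : Fin N => ((σ i : Fin N) : ℕ) < (m : ℕ)) with hFm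
      set Fm' := Finset.univ.filter (fun i : Fin N => ((σ i : Fin N) : ℕ) < (m' : ℕ)) with hFm'
      have hsub : Fm ⊆ Fm' := by
        intro i hi
        rw [hFm, Finset.mem_filter] at hi
        rw [hFm', Finset.mem_filter]
        exact ⟨hi.1, by omega⟩
      have hJsum : ∀ j, ∑ i ∈ Fm' \ Fm, e i j = 0 := by
        intro j
        have hsd : ∑ i ∈ Fm' \ Fm, e i j + ∑ i ∈ Fm, e i j = ∑ i ∈ Fm', e i j :=
          Finset.sum_sdiff hsub
        have hPj := hPeq j
        rw [hP] at hPj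
        dsimp only at hPj
        rw [← hFm, ← hFm'] at hPj
        omega
      -- the y-parts agree
      have hYeq : Finset.univ.filter (fun i : Fin N => ((σ i : Fin N) : ℕ) < (m : ℕ) ∧ n ≤ (i : ℕ))
          = Finset.univ.filter (fun i : Fin N => ((σ i : Fin N) : ℕ) < (m' : ℕ) ∧ n ≤ (i : ℕ)) := by
        apply Finset.eq_of_subset_of_card_le
        · intro i hi
          rw [Finset.mem_filter] at hi ⊢
          exact ⟨hi.1, by omega, hi.2.2⟩
        · exact le_of_eq hyeq.symm
      have hxonly : ∀ i ∈ Fm' \ Fm, (i : ℕ) < n := by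
        intro i hi
        rw [Finset.mem_sdiff, hFm', hFm] at hi
        obtain ⟨hi1, hi2⟩ := hi
        rw [Finset.mem_filter] at hi1 hi2
        by_contra hge
        push_neg at hge
        have hmem : i ∈ Finset.univ.filter
            (fun i : Fin N => ((σ i : Fin N) : ℕ) < (m' : ℕ) ∧ n ≤ (i : ℕ)) := by
          rw [Finset.mem_filter]
          exact ⟨Finset.mem_univ _, hi1.2, hge⟩
        rw [← hYeq, Finset.mem_filter] at hmem
        exact hi2 ⟨Finset.mem_univ _, hmem.2.1⟩
      have hJne : (Fm' \ Fm).Nonempty := by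
        obtain ⟨i, hi⟩ := σ.surjective ⟨(m : ℕ), by omega⟩
        refine ⟨i, ?_⟩
        rw [Finset.mem_sdiff, hFm', hFm, Finset.mem_filter, Finset.mem_filter]
        have : ((σ i : Fin N) : ℕ) = (m : ℕ) := by rw [hi]
        constructor
        · exact ⟨Finset.mem_univ _, by omega⟩
        · rintro ⟨-, hlt⟩
          omega
      -- build the contradiction subset
      set Csub : Finset ι := (Fm' \ Fm).attach.image
        (fun i => el ⟨(i.1.1 : ℕ), hxonly i.1 i.2⟩) with hCsub
      have hCsubB : Csub ⊆ B := by
        intro c hc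
        rw [hCsub, Finset.mem_image] at hc
        obtain ⟨i, -, rfl⟩ := hc
        exact helmem _
      have hCne : Csub.Nonempty := by
        obtain ⟨i, hi⟩ := hJne
        exact ⟨_, Finset.mem_image_of_mem _ (Finset.mem_attach (Fm' \ Fm) ⟨i, hi⟩)⟩
      have hCsum : ∀ j, ∑ c ∈ Csub, x c j = 0 := by
        intro j
        have hinj2 : ∀ a ∈ (Fm' \ Fm).attach, ∀ b ∈ (Fm' \ Fm).attach,
            el ⟨(a.1.1 : ℕ), hxonly a.1 a.2⟩ = el ⟨(b.1.1 : ℕ), hxonly b.1 b.2⟩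
              → a = b := by
          intro a _ b _ hab
          have h3 := congrArg Fin.val (helinj hab)
          exact Subtype.ext (Fin.ext h3)
        rw [hCsub, Finset.sum_image hinj2]
        have hstep : ∀ a : {i // i ∈ Fm' \ Fm},
            x (el ⟨(a.1.1 : ℕ), hxonly a.1 a.2⟩) j = e a.1 j := by
          intro a
          rw [he]
          dsimp only
          rw [dif_pos (hxonly a.1 a.2)]
        rw [Finset.sum_congr rfl (fun a _ => hstep a)]
        rw [Finset.sum_attach (Fm' \ Fm) (fun i => e i j)]
        exact hJsum j
      have hB'C : B \ Csub ∈ C := by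
        rw [hC, Finset.mem_filter, Finset.mem_powerset]
        constructor
        · exact subset_trans (Finset.sdiff_subset) hBA
        · intro j
          have hsd : ∑ i ∈ B \ Csub, x i j + ∑ i ∈ Csub, x i j = ∑ i ∈ B, x i j :=
            Finset.sum_sdiff hCsubB
          have h2 := hCsum j
          have h3 := hBsum j
          omega
      have hlt : (B \ Csub).card < B.card := by
        rw [Finset.card_sdiff_of_subset hCsubB]
        have h1 : 0 < Csub.card := Finset.card_pos.mpr hCne
        have h2 : Csub.card ≤ B.card := Finset.card_le_card hCsubB
        omega
      have := hBmin _ hB'C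
      omega
    have hinj : Function.Injective Φ := by
      intro m m' heq
      by_contra hne
      rcases Nat.lt_or_ge (m : ℕ) (m' : ℕ) with h | h
      · exact hkey m m' h heq
      · have : (m' : ℕ) < (m : ℕ) := by
          rcases Nat.lt_or_ge (m' : ℕ) (m : ℕ) with h2 | h2
          · exact h2
          · exact absurd (Fin.ext (le_antisymm h h2 : (m' : ℕ) = (m : ℕ)).symm) hne
        exact hkey m' m this heq.symm
    have hcard := Fintype.card_le_of_injective Φ hinj
    simp only [Fintype.card_fin, Fintype.card_prod, Fintype.card_fun] at hcard
    -- N + 1 ≤ (2d+1)^d * (M+1)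
    set K := (2 * d + 1) ^ d with hK
    have hfin : n + M + 1 ≤ (M + 1) * K := by
      calc n + M + 1 = N + 1 := by omega
        _ ≤ K * (M + 1) := hcard
        _ = (M + 1) * K := mul_comm _ _
    exact le_trans (by omega : n ≤ n + M + 1) hfin

end AuxSteinitz


/-- Let `S` be a set of `k` vertices of `G` inducing a clique or an independent
set, with all pairwise degree differences within `S` at most `M`.  Then there
is a set `T` of at most `(M+2)(2k-1)^(k-1)` vertices disjoint from `S` such
that in the induced subgraph `H = G - T` all `k` vertices of `S` have the same
degree. -/

theorem stmt_15 (k M : ℕ) (hk : 0 < k) (G : SimpleGraph V) [DecidableRel G.Adj]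
    (S : Finset V) (hS : S.card = k)
    (hcl : G.IsClique (S : Set V) ∨ Gᶜ.IsClique (S : Set V))
    (hM : ∀ u ∈ S, ∀ v ∈ S, (G.degree u : ℤ) - G.degree v ≤ M) :
    ∃ T : Finset V, Disjoint T S ∧ T.card ≤ (M + 2) * (2 * k - 1) ^ (k - 1) ∧
      ∃ d : ℕ, ∀ v ∈ S, degIn G Tᶜ v = d := by
  classical
  have hSne : S.Nonempty := by rw [← Finset.card_pos, hS]; exact hk
  obtain ⟨v₀, hv₀⟩ := hSne
  set d := k - 1 with hd
  have hS' : (S.erase v₀).card = d := by rw [Finset.card_erase_of_mem hv₀, hS]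
  set es : ↥(S.erase v₀) ≃ Fin d := (S.erase v₀).equivFinOfCardEq hS' with hes
  set sj : Fin d → V := fun j => ((es.symm j : ↥(S.erase v₀)) : V) with hsj
  have hsjmem : ∀ j, sj j ∈ S.erase v₀ := fun j => (es.symm j).2
  have hsjS : ∀ j, sj j ∈ S := fun j => Finset.mem_of_mem_erase (hsjmem j)
  have hsjne : ∀ j, sj j ≠ v₀ := fun j => Finset.ne_of_mem_erase (hsjmem j)
  -- counting helper
  have hcount : ∀ (u : V) (W : Finset V),
      ∑ w ∈ W, (if G.Adj w u then (1:ℤ) else 0) = ((W.filter (fun w => G.Adj u w)).card : ℤ) := by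
    intro u W
    rw [Finset.sum_boole]
    have h1 : W.filter (fun w => G.Adj w u) = W.filter (fun w => G.Adj u w) :=
      Finset.filter_congr (fun w _ => by rw [G.adj_comm])
    rw [h1]
  -- all vertices of S have the same degree inside S
  obtain ⟨c₀, hc₀⟩ : ∃ c₀ : ℕ, ∀ u ∈ S, (S.filter (fun w => G.Adj u w)).card = c₀ := by
    rcases hcl with hcl | hcl
    · refine ⟨k - 1, fun u hu => ?_⟩
      have : S.filter (fun w => G.Adj u w) = S.erase u := by
        ext w
        rw [Finset.mem_filter, Finset.mem_erase]
        constructor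
        · rintro ⟨hw, ha⟩
          exact ⟨(G.ne_of_adj ha).symm, hw⟩
        · rintro ⟨hne, hw⟩
          exact ⟨hw, hcl hu hw (Ne.symm hne)⟩
      rw [this, Finset.card_erase_of_mem hu, hS]
    · refine ⟨0, fun u hu => ?_⟩
      have : S.filter (fun w => G.Adj u w) = ∅ := by
        ext w
        simp only [Finset.mem_filter, Finset.notMem_empty, iff_false, not_and]
        intro hw ha
        by_cases hne : u = w
        · subst hne; exact G.irrefl ha
        · exact (hcl hu hw hne).2 ha
      rw [this, Finset.card_empty]
  -- degree decomposition
  have hdeg : ∀ u ∈ S, (G.degree u : ℤ)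
      = ((Sᶜ.filter (fun w => G.Adj u w)).card : ℤ) + (c₀ : ℤ) := by
    intro u hu
    have h1 : G.degree u = (Finset.univ.filter (fun w => G.Adj u w)).card := by
      rw [← SimpleGraph.neighborFinset_eq_filter, SimpleGraph.card_neighborFinset_eq_degree]
    have h2 : Finset.univ.filter (fun w => G.Adj u w)
        = S.filter (fun w => G.Adj u w) ∪ Sᶜ.filter (fun w => G.Adj u w) := by
      rw [← Finset.filter_union, Finset.union_compl]
    have h3 : Disjoint (S.filter (fun w => G.Adj u w)) (Sᶜ.filter (fun w => G.Adj u w)) :=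
      Finset.disjoint_filter_filter disjoint_compl_right
    rw [h1, h2, Finset.card_union_of_disjoint h3, hc₀ u hu]
    push_cast
    ring
  -- the vectors
  set x : V → Fin d → ℤ :=
    fun w j => (if G.Adj w (sj j) then 1 else 0) - (if G.Adj w v₀ then 1 else 0) with hx
  have hxbd : ∀ w ∈ Sᶜ, ∀ j, |x w j| ≤ 1 := by
    intro w _ j
    rw [hx]
    dsimp only
    split <;> split <;> norm_num
  set svec : Fin d → ℤ := fun j => (G.degree (sj j) : ℤ) - (G.degree v₀ : ℤ) with hsvec
  have hsbd : ∀ j, |svec j| ≤ (M : ℤ) := by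
    intro j
    rw [abs_le]
    constructor
    · have := hM v₀ hv₀ (sj j) (hsjS j)
      rw [hsvec]; dsimp only; linarith
    · have := hM (sj j) (hsjS j) v₀ hv₀
      rw [hsvec]; dsimp only; linarith
  have hsums : ∀ j, ∑ w ∈ Sᶜ, x w j = svec j := by
    intro j
    rw [hx]
    dsimp only
    rw [Finset.sum_sub_distrib, hcount (sj j) Sᶜ, hcount v₀ Sᶜ]
    have h1 := hdeg (sj j) (hsjS j)
    have h2 := hdeg v₀ hv₀
    rw [hsvec]
    dsimp only
    omega
  obtain ⟨T, hTA, hTsum, hTcard⟩ := subset_sum_small d M Sᶜ x hxbd svec hsbd hsums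
  have hdisj : Disjoint T S := by
    rw [Finset.disjoint_left]
    intro t ht hts
    have := hTA ht
    rw [Finset.mem_compl] at this
    exact this hts
  have hbound : T.card ≤ (M + 2) * (2 * k - 1) ^ (k - 1) := by
    have h1 : 2 * d + 1 = 2 * k - 1 := by omega
    calc T.card ≤ (M + 1) * (2 * d + 1) ^ d := hTcard
      _ ≤ (M + 2) * (2 * d + 1) ^ d := Nat.mul_le_mul_right _ (by omega)
      _ = (M + 2) * (2 * k - 1) ^ (k - 1) := by rw [h1, hd]
  -- degrees in the complement
  have hdegIn : ∀ u ∈ S, (degIn G Tᶜ u : ℤ)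
      = (G.degree u : ℤ) - ((T.filter (fun w => G.Adj u w)).card : ℤ) := by
    intro u hu
    have h1 : G.degree u = (Finset.univ.filter (fun w => G.Adj u w)).card := by
      rw [← SimpleGraph.neighborFinset_eq_filter, SimpleGraph.card_neighborFinset_eq_degree]
    have h2 : Finset.univ.filter (fun w => G.Adj u w)
        = T.filter (fun w => G.Adj u w) ∪ Tᶜ.filter (fun w => G.Adj u w) := by
      rw [← Finset.filter_union, Finset.union_compl]
    have h3 : Disjoint (T.filter (fun w => G.Adj u w)) (Tᶜ.filter (fun w => G.Adj u w)) :=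
      Finset.disjoint_filter_filter disjoint_compl_right
    have h4 : degIn G Tᶜ u = (Tᶜ.filter (fun w => G.Adj u w)).card := rfl
    rw [h4, h1, h2, Finset.card_union_of_disjoint h3]
    push_cast
    ring
  have hTcount : ∀ j, ((T.filter (fun w => G.Adj (sj j) w)).card : ℤ)
      - ((T.filter (fun w => G.Adj v₀ w)).card : ℤ) = svec j := by
    intro j
    have := hTsum j
    rw [hx] at this
    dsimp only at this
    rw [Finset.sum_sub_distrib, hcount (sj j) T, hcount v₀ T] at this
    exact this
  have hkey : ∀ j, degIn G Tᶜ (sj j) = degIn G Tᶜ v₀ := by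
    intro j
    have h1 := hdegIn (sj j) (hsjS j)
    have h2 := hdegIn v₀ hv₀
    have h3 := hTcount j
    rw [hsvec] at h3
    dsimp only at h3
    omega
  refine ⟨T, hdisj, hbound, degIn G Tᶜ v₀, ?_⟩
  intro v hv
  by_cases hveq : v = v₀
  · rw [hveq]
  · have hvmem : v ∈ S.erase v₀ := Finset.mem_erase.mpr ⟨hveq, hv⟩
    have : sj (es ⟨v, hvmem⟩) = v := by
      rw [hsj]
      dsimp only
      rw [Equiv.symm_apply_apply]
    rw [← this]
    exact hkey _
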